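/- Let X be a strong Santha-Vazirani source with bias δ on {0,1}^{2^d−1} and let g_d : {0,1}^{2^d−1} → {0,1}^d map each string to the index of the Hamming-code coset containing it. Then the distribution of g_d(X) is δ-imbalanced: for any two outcomes u₁, u₂ ∈ {0,1}^d, P[g_d(X)=u₁] ≤ ((1+δ)/(1−δ)) · P[g_d(X)=u₂]. -/

import Mathlib

open Finset

/-- `μ` is a probability distribution on the finite type `A`. -/
def IsDist {A : Type*} [Fintype A] (μ : A → ℝ) : Prop :=
  (∀ a, 0 ≤ μ a) ∧ ∑ a, μ a = 1

open Classical in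
/-- Probability of an event under a distribution on a finite type. -/
noncomputable def Pr {A : Type*} [Fintype A] (μ : A → ℝ) (p : A → Prop) : ℝ :=
  ∑ a, if p a then μ a else 0

/-- `μ` is a strong Santha-Vazirani distribution with bias `δ`: for every bit `i` and
every positive-probability assignment `z` of the other bits,
`P[Xᵢ = 1 | all other bits] ∈ [(1−δ)/2, (1+δ)/2]`. -/
def IsStrongSV {n : ℕ} (δ : ℝ) (μ : (Fin n → ZMod 2) → ℝ) : Prop :=
  ∀ (i : Fin n) (z : Fin n → ZMod 2),
    0 < Pr μ (fun x => ∀ j, j ≠ i → x j = z j) →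
      (1 - δ) / 2 * Pr μ (fun x => ∀ j, j ≠ i → x j = z j)
          ≤ Pr μ (fun x => x i = 1 ∧ ∀ j, j ≠ i → x j = z j) ∧
        Pr μ (fun x => x i = 1 ∧ ∀ j, j ≠ i → x j = z j)
          ≤ (1 + δ) / 2 * Pr μ (fun x => ∀ j, j ≠ i → x j = z j)

/-- The parity-check matrix of the Hamming code. -/
def hammingMatrix (d : ℕ) (i : Fin d) (j : Fin (2 ^ d - 1)) : ZMod 2 :=
  if Nat.testBit ((j : ℕ) + 1) (i : ℕ) then 1 else 0

/-- Membership in the Hamming code of length `2^d − 1`. -/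
def inHam (d : ℕ) (x : Fin (2 ^ d - 1) → ZMod 2) : Prop :=
  ∀ i : Fin d, ∑ j, hammingMatrix d i j * x j = 0

/-- `e_i` with `e_0 = 0`. -/
def unitVec (d : ℕ) (i : Fin (2 ^ d)) (j : Fin (2 ^ d - 1)) : ZMod 2 :=
  if (j : ℕ) + 1 = (i : ℕ) then 1 else 0

-- auxiliary
noncomputable def syndrome (d : ℕ) (x : Fin (2 ^ d - 1) → ZMod 2) : Fin d → ZMod 2 :=
  fun i => ∑ j, hammingMatrix d i j * x j

open Classical in
lemma Pr_congr {A : Type*} [Fintype A] (μ : A → ℝ) {p q : A → Prop}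
    (h : ∀ a, p a ↔ q a) : Pr μ p = Pr μ q := by
  unfold Pr
  exact Finset.sum_congr rfl fun a _ => by
    simp only [h a]

open Classical in
lemma Pr_eq_sum_filter {A : Type*} [Fintype A] (μ : A → ℝ) (p : A → Prop) :
    Pr μ p = ∑ a ∈ Finset.univ.filter p, μ a := by
  unfold Pr
  rw [Finset.sum_filter]

lemma syndrome_add (d : ℕ) (x y : Fin (2 ^ d - 1) → ZMod 2) :
    syndrome d (x + y) = syndrome d x + syndrome d y := by
  funext i
  simp [syndrome, mul_add, Finset.sum_add_distrib]

lemma zmod2_add_self (t : Fin d → ZMod 2) : t + t = 0 := by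
  funext i
  simp only [Pi.add_apply, Pi.zero_apply, CharTwo.add_self_eq_zero]

lemma coset_iff_syndrome (d : ℕ) (u : Fin (2 ^ d)) (x : Fin (2 ^ d - 1) → ZMod 2) :
    (∃ c, inHam d c ∧ x = c + unitVec d u) ↔ syndrome d x = syndrome d (unitVec d u) := by
  constructor
  · rintro ⟨c, hc, rfl⟩
    have h0 : syndrome d c = 0 := funext fun i => hc i
    rw [syndrome_add, h0, zero_add]
  · intro h
    refine ⟨x + unitVec d u, fun i => ?_, ?_⟩
    · show syndrome d (x + unitVec d u) i = 0
      rw [syndrome_add, h, zmod2_add_self]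
      rfl
    · rw [add_assoc, zmod2_add_self, add_zero]

lemma syndrome_unitVec (d : ℕ) (u : Fin (2 ^ d)) (i : Fin d) :
    syndrome d (unitVec d u) i = if Nat.testBit (u : ℕ) (i : ℕ) then 1 else 0 := by
  unfold syndrome unitVec
  by_cases hu : (u : ℕ) = 0
  · rw [Finset.sum_eq_zero, hu]
    · simp
    · intro j _
      simp [hu]
  · have hlt : (u : ℕ) < 2 ^ d := u.isLt
    have h1 : 1 ≤ 2 ^ d := Nat.one_le_two_pow
    have hj0 : (u : ℕ) - 1 < 2 ^ d - 1 := by omega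
    set j₀ : Fin (2 ^ d - 1) := ⟨(u : ℕ) - 1, hj0⟩
    rw [Finset.sum_eq_single j₀]
    · have : (j₀ : ℕ) + 1 = (u : ℕ) := by simp [j₀]; omega
      rw [if_pos this, mul_one, hammingMatrix, this]
    · intro j _ hj
      have : (j : ℕ) + 1 ≠ (u : ℕ) := by
        intro h
        apply hj
        apply Fin.ext
        simp [j₀]; omega
      rw [if_neg this, mul_zero]
    · intro h
      exact absurd (Finset.mem_univ j₀) h

open Classical in
lemma Pr_single {A : Type*} [Fintype A] (μ : A → ℝ) {p : A → Prop} {a : A}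
    (h : ∀ x, p x ↔ x = a) : Pr μ p = μ a := by
  unfold Pr
  have step : ∀ x : A, (if p x then μ x else 0) = if x = a then μ x else 0 := by
    intro x
    by_cases hp : p x
    · have hxa := (h x).1 hp
      subst hxa
      simp [hp]
    · have hxa : x ≠ a := fun e => hp ((h x).2 e)
      simp [hp, hxa]
  refine Eq.trans (Finset.sum_congr rfl fun x _ => step x) ?_
  simp

open Classical in
lemma Pr_pair {A : Type*} [Fintype A] (μ : A → ℝ) {p : A → Prop} {a b : A}
    (hab : a ≠ b) (h : ∀ x, p x ↔ x = a ∨ x = b) : Pr μ p = μ a + μ b := by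
  unfold Pr
  have step : ∀ x : A, (if p x then μ x else 0)
      = (if x = a then μ x else 0) + (if x = b then μ x else 0) := by
    intro x
    by_cases hp : p x
    · rcases (h x).1 hp with rfl | rfl
      · simp [hp, hab]
      · simp [hp, Ne.symm hab]
    · have hxa : x ≠ a := fun e => hp ((h x).2 (Or.inl e))
      have hxb : x ≠ b := fun e => hp ((h x).2 (Or.inr e))
      simp [hp, hxa, hxb]
  refine Eq.trans (Finset.sum_congr rfl fun x _ => step x) ?_
  rw [Finset.sum_add_distrib]
  simp

lemma flip_bound {n : ℕ} {δ : ℝ} (hδ0 : 0 ≤ δ) (hδ1 : δ < 1)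
    {μ : (Fin n → ZMod 2) → ℝ} (hμ : ∀ a, 0 ≤ μ a) (hsv : IsStrongSV δ μ)
    (x : Fin n → ZMod 2) (i : Fin n) :
    μ x ≤ (1 + δ) / (1 - δ) * μ (Function.update x i (x i + 1)) := by
  have h1δ : (0:ℝ) < 1 - δ := by linarith
  have key2 : ∀ v : ZMod 2, v = 0 ∨ v = 1 := by decide
  set u0 := Function.update x i 0 with hu0
  set u1 := Function.update x i 1 with hu1
  have hne : u0 ≠ u1 := by
    intro h
    have := congrFun h i
    simp only [hu0, hu1, Function.update_self] at this
    exact absurd this (by decide)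
  have hiff : ∀ a : Fin n → ZMod 2,
      (∀ j, j ≠ i → a j = x j) ↔ (a = u0 ∨ a = u1) := by
    intro a
    constructor
    · intro h
      have ha : a = Function.update x i (a i) := by
        funext j
        by_cases hj : j = i
        · subst hj; rw [Function.update_self]
        · rw [Function.update_of_ne hj]; exact h j hj
      rcases key2 (a i) with hv | hv
      · left; rw [hu0, ha, hv]
      · right; rw [hu1, ha, hv]
    · rintro (rfl | rfl) <;> · intro j hj; exact Function.update_of_ne hj _ _
  have hiff2 : ∀ a : Fin n → ZMod 2,
      (a i = 1 ∧ ∀ j, j ≠ i → a j = x j) ↔ a = u1 := by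
    intro a
    constructor
    · rintro ⟨h1, h⟩
      rw [hu1]
      funext j
      by_cases hj : j = i
      · subst hj; rw [Function.update_self]; exact h1
      · rw [Function.update_of_ne hj]; exact h j hj
    · rintro rfl
      exact ⟨Function.update_self _ _ _, fun j hj => Function.update_of_ne hj _ _⟩
  have hS : Pr μ (fun a => ∀ j, j ≠ i → a j = x j) = μ u0 + μ u1 :=
    Pr_pair μ hne hiff
  have hF : Pr μ (fun a => a i = 1 ∧ ∀ j, j ≠ i → a j = x j) = μ u1 :=
    Pr_single μ hiff2
  have hboth : μ u0 ≤ (1 + δ) / (1 - δ) * μ u1 ∧ μ u1 ≤ (1 + δ) / (1 - δ) * μ u0 := by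
    rcases lt_or_ge 0 (Pr μ (fun a => ∀ j, j ≠ i → a j = x j)) with hpos | hle
    · obtain ⟨hlo, hhi⟩ := hsv i x hpos
      rw [hS, hF] at hlo hhi
      set S := μ u0 + μ u1 with hSdef
      have hlo0 : (1 - δ) / 2 * S ≤ μ u0 := by linarith
      have hhi0 : μ u0 ≤ (1 + δ) / 2 * S := by linarith
      have hc0 : (1 + δ) / (1 - δ) * ((1 - δ) / 2 * S) = (1 + δ) / 2 * S := by
        field_simp
      constructor
      · have := mul_le_mul_of_nonneg_left hlo
          (by positivity : (0:ℝ) ≤ (1 + δ) / (1 - δ))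
        linarith
      · have := mul_le_mul_of_nonneg_left hlo0
          (by positivity : (0:ℝ) ≤ (1 + δ) / (1 - δ))
        linarith
    · rw [hS] at hle
      have h0a := hμ u0
      have h0b := hμ u1
      have e0 : μ u0 = 0 := by linarith
      have e1 : μ u1 = 0 := by linarith
      rw [e0, e1]; simp
  rcases key2 (x i) with hx | hx
  · have e1 : Function.update x i (x i + 1) = u1 := by rw [hx, zero_add, hu1]
    have e0 : x = u0 := by rw [hu0, ← hx, Function.update_eq_self]
    rw [e1, e0]
    exact hboth.1
  · have e1 : Function.update x i (x i + 1) = u0 := by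
      rw [hx, (show (1 : ZMod 2) + 1 = 0 by decide), hu0]
    have e0 : x = u1 := by rw [hu1, ← hx, Function.update_eq_self]
    rw [e1, e0]
    exact hboth.2

/-- If `X` is a strong SV source with bias `δ` on `{0,1}^{2^d−1}` and `g_d` maps each
string to the index of its Hamming-code coset, then `g_d(X)` is `δ`-imbalanced:
`P[g_d(X)=u₁] ≤ ((1+δ)/(1−δ))·P[g_d(X)=u₂]` for all `u₁, u₂`. -/
theorem coset_distribution_imbalanced (d : ℕ) (hd : 1 ≤ d)
    (δ : ℝ) (hδ0 : 0 ≤ δ) (hδ1 : δ < 1)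
    (μ : (Fin (2 ^ d - 1) → ZMod 2) → ℝ) (hμ : IsDist μ) (hsv : IsStrongSV δ μ) :
    ∀ u₁ u₂ : Fin (2 ^ d),
      Pr μ (fun x => ∃ c, inHam d c ∧ x = c + unitVec d u₁)
        ≤ (1 + δ) / (1 - δ) * Pr μ (fun x => ∃ c, inHam d c ∧ x = c + unitVec d u₂) := by
  intro u₁ u₂
  have h1δ : (0:ℝ) < 1 - δ := by linarith
  have hr0 : (0:ℝ) ≤ (1 + δ) / (1 - δ) := by positivity
  have hr1 : (1:ℝ) ≤ (1 + δ) / (1 - δ) := by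
    rw [le_div_iff₀ h1δ]; linarith
  rw [Pr_congr μ (coset_iff_syndrome d u₁), Pr_congr μ (coset_iff_syndrome d u₂)]
  have hxor : (u₁ : ℕ) ^^^ (u₂ : ℕ) < 2 ^ d := Nat.xor_lt_two_pow u₁.isLt u₂.isLt
  set u₃ : Fin (2 ^ d) := ⟨(u₁ : ℕ) ^^^ (u₂ : ℕ), hxor⟩ with hu₃
  have hw : syndrome d (unitVec d u₃)
      = syndrome d (unitVec d u₁) + syndrome d (unitVec d u₂) := by
    funext i
    rw [Pi.add_apply, syndrome_unitVec, syndrome_unitVec, syndrome_unitVec]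
    have hval : (u₃ : ℕ) = (u₁ : ℕ) ^^^ (u₂ : ℕ) := rfl
    rw [hval, Nat.testBit_xor]
    cases h1 : Nat.testBit (u₁ : ℕ) (i : ℕ) <;>
      cases h2 : Nat.testBit (u₂ : ℕ) (i : ℕ) <;>
      simp [CharTwo.add_self_eq_zero]
  have hpoint : ∀ x, μ x ≤ (1 + δ) / (1 - δ) * μ (x + unitVec d u₃) := by
    intro x
    by_cases h0 : (u₃ : ℕ) = 0
    · have hw0 : unitVec d u₃ = 0 := by
        funext j
        have hne : ¬((j : ℕ) + 1 = (u₃ : ℕ)) := fun hcontra =>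
          Nat.succ_ne_zero _ (hcontra.trans h0)
        show (if (j : ℕ) + 1 = (u₃ : ℕ) then (1 : ZMod 2) else 0) = 0
        rw [if_neg hne]
      rw [hw0, add_zero]
      nlinarith [hμ.1 x]
    · have hlt := u₃.isLt
      have h2d : 1 ≤ 2 ^ d := Nat.one_le_two_pow
      have hj0 : (u₃ : ℕ) - 1 < 2 ^ d - 1 := by omega
      have hxw : x + unitVec d u₃
          = Function.update x ⟨(u₃ : ℕ) - 1, hj0⟩ (x ⟨(u₃ : ℕ) - 1, hj0⟩ + 1) := by
        funext j
        by_cases hj : j = ⟨(u₃ : ℕ) - 1, hj0⟩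
        · subst hj
          rw [Function.update_self, Pi.add_apply]
          congr 1
          rw [unitVec, if_pos]
          show ((u₃ : ℕ) - 1) + 1 = (u₃ : ℕ)
          omega
        · rw [Function.update_of_ne hj, Pi.add_apply]
          have : unitVec d u₃ j = 0 := by
            rw [unitVec, if_neg]
            intro h
            apply hj
            apply Fin.ext
            show (j : ℕ) = (u₃ : ℕ) - 1
            omega
          rw [this, add_zero]
      rw [hxw]
      exact flip_bound hδ0 hδ1 hμ.1 hsv x _
  rw [Pr_eq_sum_filter, Pr_eq_sum_filter]
  refine le_trans (Finset.sum_le_sum fun x _ => hpoint x) ?_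
  rw [← Finset.mul_sum]
  refine mul_le_mul_of_nonneg_left (le_of_eq ?_) hr0
  refine Finset.sum_nbij' (i := fun x => x + unitVec d u₃)
    (j := fun y => y + unitVec d u₃) ?_ ?_ ?_ ?_ ?_
  · intro x hx
    simp only [Finset.mem_filter, Finset.mem_univ, true_and] at hx ⊢
    rw [syndrome_add, hx, hw, ← add_assoc, zmod2_add_self, zero_add]
  · intro y hy
    simp only [Finset.mem_filter, Finset.mem_univ, true_and] at hy ⊢
    rw [syndrome_add, hy, hw, add_comm (syndrome d (unitVec d u₁)),
      ← add_assoc, zmod2_add_self, zero_add]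
  · intro x _
    show x + unitVec d u₃ + unitVec d u₃ = x
    rw [add_assoc, zmod2_add_self, add_zero]
  · intro y _
    show y + unitVec d u₃ + unitVec d u₃ = y
    rw [add_assoc, zmod2_add_self, add_zero]
  · intro x _
    rfl
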